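/- Fix an integer d ≥ 1 with d ≠ 2, set α = 2^{d-2}, and let p(x) = α x₁^d + α² x₂^d + ⋯ + α^n xₙ^d on ℂ^n. There do not exist x* ∈ ℂ^n with x* ≠ 0 and λ* ∈ ℂ such that ∇p(x*) = λ* x* and det(H(x*, λ*)) = 0, where H(x,λ) = [[∇²p(x) - λ Iₙ, x], [x^T, 0]]. -/

import Mathlib

lemma geom_aux (a : ℕ) : ∀ n, a ≤ n → (∑ j ∈ Finset.Ico a n, ((4:ℝ)⁻¹)^(j+1)) ≤ 1/3 * (4:ℝ)⁻¹^a - 1/3 * (4:ℝ)⁻¹^n := by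
  intro n hn
  induction n, hn using Nat.le_induction with
  | base => simp
  | succ n hn ih =>
    rw [Finset.sum_Ico_succ_top hn]
    nlinarith [pow_succ ((4:ℝ)⁻¹) n, pow_pos (show (0:ℝ) < 4⁻¹ by norm_num) n]

lemma key (n : ℕ) (x : Fin n → ℂ) (r : ℝ) (hr : 0 < r)
    (h : ∀ k : Fin n, x k ≠ 0 → ‖x k‖ = r * (2:ℝ)⁻¹ ^ ((k:ℕ)+1))
    (k₀ : Fin n) (hk₀ : x k₀ ≠ 0)
    (hmin : ∀ k : Fin n, x k ≠ 0 → (k₀:ℕ) ≤ (k:ℕ)) :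
    ∑ k, (x k)^2 ≠ 0 := by
  intro hsum
  have habs : ∀ k : Fin n, x k ≠ 0 → ‖x k ^ 2‖ = r^2 * (4:ℝ)⁻¹ ^ ((k:ℕ)+1) := by
    intro k hk
    rw [norm_pow, h k hk, mul_pow, ← pow_mul, mul_comm ((k:ℕ)+1) 2, pow_mul]
    norm_num
  have hsplit : x k₀ ^ 2 = - ∑ k ∈ Finset.univ.erase k₀, x k ^ 2 := by
    have := Finset.add_sum_erase Finset.univ (fun k => x k ^ 2) (Finset.mem_univ k₀)
    rw [hsum] at this
    linear_combination this
  have hb : ‖x k₀ ^ 2‖ ≤ ∑ k ∈ Finset.univ.erase k₀, ‖x k ^ 2‖ := by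
    rw [hsplit, norm_neg]
    exact norm_sum_le _ _
  set T := (Finset.univ.erase k₀).filter (fun k => x k ≠ 0) with hT
  have h1 : ∑ k ∈ Finset.univ.erase k₀, ‖x k ^ 2‖
      = ∑ k ∈ T, r^2 * (4:ℝ)⁻¹ ^ ((k:ℕ)+1) := by
    rw [hT, Finset.sum_filter]
    apply Finset.sum_congr rfl
    intro k _
    by_cases hk : x k = 0
    · simp [hk]
    · simp [hk, habs k hk]
  have h2 : ∑ k ∈ T, r^2 * (4:ℝ)⁻¹ ^ ((k:ℕ)+1)
      = ∑ j ∈ T.image (Fin.val), r^2 * (4:ℝ)⁻¹ ^ (j+1) := by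
    rw [Finset.sum_image]
    intro a _ b _ hab
    exact Fin.val_injective hab
  have h3 : T.image Fin.val ⊆ Finset.Ico ((k₀:ℕ)+1) n := by
    intro j hj
    simp only [Finset.mem_image] at hj
    obtain ⟨k, hk, rfl⟩ := hj
    rw [hT, Finset.mem_filter, Finset.mem_erase] at hk
    refine Finset.mem_Ico.mpr ⟨?_, k.isLt⟩
    have h5 := hmin k hk.2
    have hne : (k:ℕ) ≠ (k₀:ℕ) := fun hc => hk.1.1 (Fin.ext hc)
    omega
  have h4 : ∑ j ∈ T.image (Fin.val), r^2 * (4:ℝ)⁻¹ ^ (j+1)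
      ≤ ∑ j ∈ Finset.Ico ((k₀:ℕ)+1) n, r^2 * (4:ℝ)⁻¹ ^ (j+1) := by
    apply Finset.sum_le_sum_of_subset_of_nonneg h3
    intro j _ _
    positivity
  have h6 : ∑ j ∈ Finset.Ico ((k₀:ℕ)+1) n, r^2 * (4:ℝ)⁻¹ ^ (j+1)
      ≤ r^2 * (1/3 * (4:ℝ)⁻¹^((k₀:ℕ)+1) - 1/3 * (4:ℝ)⁻¹^n) := by
    rw [← Finset.mul_sum]
    exact mul_le_mul_of_nonneg_left (geom_aux _ n k₀.isLt) (sq_nonneg r)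
  have hk0abs := habs k₀ hk₀
  have hp1 : (0:ℝ) < (4:ℝ)⁻¹^((k₀:ℕ)+1) := by positivity
  have hp2 : (0:ℝ) < (4:ℝ)⁻¹^n := by positivity
  nlinarith [hb, h1, h2, h4, h6, sq_nonneg r, mul_pos (mul_pos hr hr) hp1]

open Matrix in
lemma det_bordered (n : ℕ) (g : Fin n → ℂ) (x : Fin n → ℂ) (hg : ∀ k, g k ≠ 0) :
    Matrix.det (Matrix.fromBlocks (Matrix.diagonal g)
      (Matrix.of fun (i : Fin n) (_ : Unit) => x i)
      (Matrix.of fun (_ : Unit) (j : Fin n) => x j) (0 : Matrix Unit Unit ℂ))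
    = (∏ k, g k) * (-(∑ k, x k ^ 2 * (g k)⁻¹)) := by
  have hdet : IsUnit (Matrix.diagonal g).det := by
    rw [Matrix.det_diagonal]
    exact (Finset.prod_ne_zero_iff.mpr fun k _ => hg k).isUnit
  letI := Matrix.invertibleOfIsUnitDet _ hdet
  rw [Matrix.det_fromBlocks₁₁]
  congr 1
  · exact Matrix.det_diagonal
  rw [Matrix.det_unique]
  have hinv : (⅟(Matrix.diagonal g) : Matrix (Fin n) (Fin n) ℂ) = Matrix.diagonal (fun k => (g k)⁻¹) := by
    have h1 : Matrix.diagonal g * Matrix.diagonal (fun k => (g k)⁻¹) = 1 := by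
      rw [Matrix.diagonal_mul_diagonal]
      simp [mul_inv_cancel₀, hg]
    exact invOf_eq_right_inv h1
  rw [hinv]
  simp [Matrix.mul_apply, Matrix.diagonal_apply, Finset.sum_ite_eq, sq]
  exact Finset.sum_congr rfl fun k _ => by ring

lemma finisher (n : ℕ) (x : Fin n → ℂ) (g : Fin n → ℂ) (c : ℂ) (r : ℝ)
    (hg : ∀ k, g k ≠ 0) (hc : c ≠ 0)
    (hgc : ∀ k, x k ≠ 0 → g k = c) (hr : 0 < r)
    (habs : ∀ k, x k ≠ 0 → ‖x k‖ = r * (2:ℝ)⁻¹^((k:ℕ)+1))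
    (k₀ : Fin n) (hk₀ : x k₀ ≠ 0) (hmin : ∀ k, x k ≠ 0 → (k₀:ℕ) ≤ (k:ℕ))
    (hdet : Matrix.det (Matrix.fromBlocks (Matrix.diagonal g)
      (Matrix.of fun (i : Fin n) (_ : Unit) => x i)
      (Matrix.of fun (_ : Unit) (j : Fin n) => x j) (0 : Matrix Unit Unit ℂ)) = 0) :
    False := by
  rw [det_bordered n g x hg] at hdet
  have hprod : (∏ k, g k) ≠ 0 := Finset.prod_ne_zero_iff.mpr fun k _ => hg k
  have hsum0 : ∑ k, x k ^ 2 * (g k)⁻¹ = 0 := by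
    rcases mul_eq_zero.mp hdet with h | h
    · exact absurd h hprod
    · exact neg_eq_zero.mp h
  have h7 : (∑ k, x k ^ 2) * c⁻¹ = 0 := by
    rw [Finset.sum_mul, ← hsum0]
    apply Finset.sum_congr rfl
    intro k _
    by_cases hk : x k = 0
    · simp [hk]
    · rw [hgc k hk]
  have h8 : ∑ k, x k ^ 2 = 0 := by
    rcases mul_eq_zero.mp h7 with h | h
    · exact h
    · exact absurd h (inv_ne_zero hc)
  exact key n x r hr habs k₀ hk₀ hmin h8

theorem stmt5 (n d : ℕ) (hd1 : 1 ≤ d) (hd2 : d ≠ 2) :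
    ¬ ∃ (x : Fin n → ℂ) (lam : ℂ), x ≠ 0 ∧
      (∀ k : Fin n,
        (d : ℂ) * ((2 : ℂ) ^ ((d : ℤ) - 2)) ^ ((k : ℕ) + 1) * x k ^ (d - 1)
          = lam * x k) ∧
      Matrix.det (Matrix.fromBlocks
        (Matrix.diagonal (fun k : Fin n =>
            (d : ℂ) * ((d : ℂ) - 1) * ((2 : ℂ) ^ ((d : ℤ) - 2)) ^ ((k : ℕ) + 1)
              * x k ^ ((d : ℤ) - 2))
          - lam • (1 : Matrix (Fin n) (Fin n) ℂ))
        (Matrix.of fun (i : Fin n) (_ : Unit) => x i)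
        (Matrix.of fun (_ : Unit) (j : Fin n) => x j)
        (0 : Matrix Unit Unit ℂ)) = 0 := by
  rintro ⟨x, lam, hx0, heig, hdet⟩
  -- minimal support element
  have hex : ∃ k, x k ≠ 0 := Function.ne_iff.mp hx0
  set S : Finset (Fin n) := Finset.univ.filter (fun k => x k ≠ 0) with hS
  have hSne : S.Nonempty := hex.elim fun k hk => ⟨k, by simp [hS, hk]⟩
  set k₀ := S.min' hSne with hk₀def
  have hk₀ : x k₀ ≠ 0 := (Finset.mem_filter.mp (S.min'_mem hSne)).2
  have hmin : ∀ k, x k ≠ 0 → (k₀:ℕ) ≤ (k:ℕ) := fun k hk =>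
    S.min'_le k (by simp [hS, hk])
  -- diagonal form
  set f : Fin n → ℂ := fun k =>
    (d : ℂ) * ((d : ℂ) - 1) * ((2 : ℂ) ^ ((d : ℤ) - 2)) ^ ((k : ℕ) + 1) * x k ^ ((d : ℤ) - 2)
    with hf
  have hAg : Matrix.diagonal f - lam • (1 : Matrix (Fin n) (Fin n) ℂ)
      = Matrix.diagonal (fun k => f k - lam) := by
    rw [Matrix.smul_one_eq_diagonal, ← Matrix.diagonal_sub]
  rw [hAg] at hdet
  rcases Nat.lt_or_ge d 2 with hdlt | hdge
  · -- d = 1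
    have hd : d = 1 := by omega
    subst hd
    have heq : ∀ k : Fin n, lam * x k = ((2:ℂ)⁻¹) ^ ((k:ℕ)+1) := by
      intro k
      have h := heig k
      norm_num at h
      rw [← h]
      norm_num
    have hlam : lam ≠ 0 := by
      intro hl
      have h2 : ((2:ℂ)⁻¹) ^ ((k₀:ℕ)+1) ≠ 0 := pow_ne_zero _ (by norm_num)
      have := heq k₀
      rw [hl, zero_mul] at this
      exact h2 this.symm
    have hf0 : ∀ k, f k = 0 := by
      intro k
      simp [hf]
    have hg : ∀ k : Fin n, f k - lam ≠ 0 := by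
      intro k
      rw [hf0 k, zero_sub]
      exact neg_ne_zero.mpr hlam
    have hgc : ∀ k : Fin n, x k ≠ 0 → f k - lam = -lam := by
      intro k _
      rw [hf0 k, zero_sub]
    have habs : ∀ k : Fin n, x k ≠ 0 →
        ‖x k‖ = (‖lam‖)⁻¹ * (2:ℝ)⁻¹ ^ ((k:ℕ)+1) := by
      intro k _
      have h := congrArg (‖·‖) (heq k)
      rw [norm_mul, norm_pow, norm_inv, Complex.norm_two] at h
      have hla : ‖lam‖ ≠ 0 := norm_ne_zero_iff.mpr hlam
      field_simp at h ⊢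
      linarith [h]
    exact finisher n x _ (-lam) (‖lam‖)⁻¹ hg (neg_ne_zero.mpr hlam) hgc
      (inv_pos.mpr (norm_pos_iff.mpr hlam)) habs k₀ hk₀ hmin hdet
  · -- d ≥ 3
    obtain ⟨e, rfl⟩ : ∃ e, d = e + 2 := ⟨d - 2, by omega⟩
    have he : e ≠ 0 := by omega
    have hcast : (((e+2:ℕ)):ℤ) - 2 = (e:ℤ) := by push_cast; ring
    have hα : (2:ℂ) ^ ((((e+2:ℕ)):ℤ) - 2) = (2:ℂ)^e := by rw [hcast, zpow_natCast]
    have hxz : ∀ k : Fin n, x k ^ ((((e+2:ℕ)):ℤ)-2) = x k ^ e := fun k => by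
      rw [hcast, zpow_natCast]
    have hlameq : ∀ k : Fin n, x k ≠ 0 →
        ((e+2:ℕ):ℂ) * ((2:ℂ)^e)^((k:ℕ)+1) * x k ^ e = lam := by
      intro k hk
      have h := heig k
      rw [hα] at h
      have h2 : (((e+2:ℕ):ℂ) * ((2:ℂ)^e)^((k:ℕ)+1) * x k ^ e) * x k = lam * x k := by
        rw [mul_assoc, ← pow_succ]
        exact h
      exact mul_right_cancel₀ hk h2
    have hlam : lam ≠ 0 := by
      rw [← hlameq k₀ hk₀]
      refine mul_ne_zero (mul_ne_zero ?_ ?_) (pow_ne_zero _ hk₀)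
      · exact Nat.cast_ne_zero.mpr (by omega)
      · exact pow_ne_zero _ (pow_ne_zero _ two_ne_zero)
    have hfk : ∀ k : Fin n, x k ≠ 0 → f k = (((e+2:ℕ):ℂ) - 1) * lam := by
      intro k hk
      rw [hf]
      dsimp only
      rw [hα, hxz k, ← hlameq k hk]
      ring
    have hgc : ∀ k : Fin n, x k ≠ 0 → f k - lam = (e:ℂ) * lam := by
      intro k hk
      rw [hfk k hk]
      push_cast
      ring
    have hce : ((e:ℂ)) * lam ≠ 0 := mul_ne_zero (Nat.cast_ne_zero.mpr he) hlam
    have hg : ∀ k : Fin n, f k - lam ≠ 0 := by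
      intro k
      by_cases hk : x k = 0
      · have hf0 : f k = 0 := by
          rw [hf]
          dsimp only
          rw [hxz k, hk, zero_pow he, mul_zero]
        rw [hf0, zero_sub]
        exact neg_ne_zero.mpr hlam
      · rw [hgc k hk]
        exact hce
    -- modulus analysis
    set u : Fin n → ℝ := fun k => (2:ℝ)^((k:ℕ)+1) * ‖x k‖ with hu
    have hpow : ∀ k : Fin n, x k ≠ 0 →
        (u k)^e = ‖lam‖ / ((e+2:ℕ):ℝ) := by
      intro k hk
      have h := congrArg (‖·‖) (hlameq k hk)
      rw [norm_mul, norm_mul, norm_pow, norm_pow, norm_pow, Complex.norm_two,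
        Complex.norm_natCast] at h
      have hne : ((e+2:ℕ):ℝ) ≠ 0 := Nat.cast_ne_zero.mpr (by omega)
      rw [hu]
      dsimp only
      have hswap : ((2:ℝ)^((k:ℕ)+1))^e = ((2:ℝ)^e)^((k:ℕ)+1) := by
        rw [← pow_mul, ← pow_mul, mul_comm]
      rw [mul_pow, hswap, eq_div_iff hne]
      linear_combination h
    have huconst : ∀ k : Fin n, x k ≠ 0 → u k = u k₀ := by
      intro k hk
      have h1 := (hpow k hk).trans (hpow k₀ hk₀).symm
      have hinj := (pow_left_strictMonoOn₀ (M₀ := ℝ) he).injOn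
      refine hinj ?_ ?_ h1
      · simp only [Set.mem_setOf_eq, hu]
        positivity
      · simp only [Set.mem_setOf_eq, hu]
        positivity
    have hr : 0 < u k₀ := by
      rw [hu]
      have := norm_pos_iff.mpr hk₀
      positivity
    have habs : ∀ k : Fin n, x k ≠ 0 →
        ‖x k‖ = u k₀ * (2:ℝ)⁻¹ ^ ((k:ℕ)+1) := by
      intro k hk
      rw [← huconst k hk, hu]
      dsimp only
      rw [inv_pow]
      have h2 : ((2:ℝ)^((k:ℕ)+1)) ≠ 0 := by positivity
      field_simp
    exact finisher n x _ ((e:ℂ) * lam) (u k₀) hg hce hgc hr habs k₀ hk₀ hmin hdet
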